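/- Let q be a prime power with q = 4 or q ≥ 7. The set S₁ ⊆ PG(3,q) of 2q+1 points given in homogeneous coordinates by S₁ = {(1,0,0,0)} ∪ {(1,a,0,0) : a ∈ F_q, a ≠ 0} ∪ {(0,1,a,a²) : a ∈ F_q, a ≠ 0} ∪ {(0,0,1,0), (0,0,0,1)} is a minimal 1-saturating set in PG(3,q). -/

import Mathlib

set_option linter.unusedSectionVars false
set_option maxHeartbeats 1000000

/-- `v` is a linear combination of at most `k` vectors of the set `S`. -/
def IsCombOfAtMost {F : Type} [Field F] {d : ℕ} (S : Set (Fin d → F)) (k : ℕ)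
    (v : Fin d → F) : Prop :=
  ∃ (t : Finset (Fin d → F)) (c : (Fin d → F) → F),
    ↑t ⊆ S ∧ t.card ≤ k ∧ v = ∑ w ∈ t, c w • w

/-- Every point of `PG(d-1,q)` (i.e. every nonzero vector of `F_q^d`) is a
linear combination of at most `k` vectors of `S`. -/
def SaturatesWithin {F : Type} [Field F] {d : ℕ} (S : Set (Fin d → F)) (k : ℕ) : Prop :=
  ∀ v : Fin d → F, v ≠ 0 → IsCombOfAtMost S k v

/-- `S` is a `ρ`-saturating set: every point is a linear combination of at most
`ρ+1` points of `S`, and `ρ` is the smallest value with this property. -/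
def IsSaturatingSet {F : Type} [Field F] {d : ℕ} (S : Set (Fin d → F)) (ρ : ℕ) : Prop :=
  SaturatesWithin S (ρ + 1) ∧ ∀ k < ρ + 1, ¬ SaturatesWithin S k

/-- `S` is a minimal `ρ`-saturating set: no proper subset of `S` is `ρ`-saturating. -/
def IsMinimalSaturatingSet {F : Type} [Field F] {d : ℕ} (S : Set (Fin d → F)) (ρ : ℕ) : Prop :=
  IsSaturatingSet S ρ ∧ ∀ S' ⊂ S, ¬ IsSaturatingSet S' ρ

/-- The set `S₁ ⊆ PG(3,q)` of `2q+1` points of the "oval plus line" construction. -/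
def setS1 (F : Type) [Field F] : Set (Fin 4 → F) :=
  {![1, 0, 0, 0]}
  ∪ {w | ∃ a : F, a ≠ 0 ∧ w = ![1, a, 0, 0]}
  ∪ {w | ∃ a : F, a ≠ 0 ∧ w = ![0, 1, a, a ^ 2]}
  ∪ {![0, 0, 1, 0], ![0, 0, 0, 1]}

section Helpers

variable {F : Type} [Field F]

lemma vec4_eq_iff (a b c d a' b' c' d' : F) :
    ![a,b,c,d] = ![a',b',c',d'] ↔ a = a' ∧ b = b' ∧ c = c' ∧ d = d' := by
  constructor
  · intro h
    exact ⟨congrFun h 0, congrFun h 1, congrFun h 2, congrFun h 3⟩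
  · rintro ⟨rfl, rfl, rfl, rfl⟩; rfl

lemma vec4_ext (v : Fin 4 → F) : v = ![v 0, v 1, v 2, v 3] := by
  funext i; fin_cases i <;> rfl

lemma smul_add_vec4 (c e a b c' d a' b' c'' d' : F) :
    c • ![a,b,c',d] + e • ![a',b',c'',d'] =
      ![c*a+e*a', c*b+e*b', c*c'+e*c'', c*d+e*d'] := by
  funext i; fin_cases i <;> simp

lemma smul_vec4 (c a b c' d : F) : c • ![a,b,c',d] = ![c*a, c*b, c*c', c*d] := by
  funext i; fin_cases i <;> simp

lemma mem_setS1_iff (s : Fin 4 → F) :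
    s ∈ setS1 F ↔ (∃ a : F, s = ![1,a,0,0]) ∨ (∃ b : F, b ≠ 0 ∧ s = ![0,1,b,b^2])
      ∨ s = ![0,0,1,0] ∨ s = ![0,0,0,1] := by
  simp only [setS1, Set.mem_union, Set.mem_singleton_iff, Set.mem_setOf_eq,
    Set.mem_insert_iff]
  constructor
  · rintro (((h | ⟨a, ha, h⟩) | ⟨a, ha, h⟩) | h | h)
    · exact Or.inl ⟨0, h⟩
    · exact Or.inl ⟨a, h⟩
    · exact Or.inr (Or.inl ⟨a, ha, h⟩)
    · exact Or.inr (Or.inr (Or.inl h))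
    · exact Or.inr (Or.inr (Or.inr h))
  · rintro (⟨a, rfl⟩ | ⟨b, hb, h⟩ | h | h)
    · by_cases ha : a = 0
      · subst ha; exact Or.inl (Or.inl (Or.inl rfl))
      · exact Or.inl (Or.inl (Or.inr ⟨a, ha, rfl⟩))
    · exact Or.inl (Or.inr ⟨b, hb, h⟩)
    · exact Or.inr (Or.inl h)
    · exact Or.inr (Or.inr h)

lemma memA (a : F) : ![1,a,0,0] ∈ setS1 F := (mem_setS1_iff _).2 (Or.inl ⟨a, rfl⟩)
lemma memC {b : F} (hb : b ≠ 0) : ![0,1,b,b^2] ∈ setS1 F :=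
  (mem_setS1_iff _).2 (Or.inr (Or.inl ⟨b, hb, rfl⟩))
lemma memE : ![0,0,1,0] ∈ setS1 F := (mem_setS1_iff _).2 (Or.inr (Or.inr (Or.inl rfl)))
lemma memF : ![0,0,0,1] ∈ setS1 F := (mem_setS1_iff _).2 (Or.inr (Or.inr (Or.inr rfl)))

variable {d : ℕ}

lemma comb_one {S : Set (Fin d → F)} {s v : Fin d → F} (hs : s ∈ S) {c : F}
    (hv : v = c • s) (k : ℕ) (hk : 1 ≤ k) : IsCombOfAtMost S k v := by
  refine ⟨{s}, fun _ => c, ?_, by simpa using hk, by simpa using hv⟩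
  simpa using hs

lemma comb_two {S : Set (Fin d → F)} {s₁ s₂ v : Fin d → F} (h₁ : s₁ ∈ S) (h₂ : s₂ ∈ S)
    {c₁ c₂ : F} (hv : v = c₁ • s₁ + c₂ • s₂) : IsCombOfAtMost S 2 v := by
  classical
  by_cases h : s₁ = s₂
  · subst h
    exact comb_one h₁ (by rw [hv, ← add_smul]) 2 one_le_two
  · refine ⟨{s₁, s₂}, fun w => if w = s₁ then c₁ else c₂, ?_, ?_, ?_⟩
    · intro x hx
      simp only [Finset.coe_insert, Finset.coe_singleton, Set.mem_insert_iff,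
        Set.mem_singleton_iff] at hx
      rcases hx with rfl | rfl <;> assumption
    · exact (Finset.card_insert_le _ _).trans (by simp)
    · rw [Finset.sum_pair h]
      simp [Ne.symm h, ← hv]

lemma comb_mono {S S' : Set (Fin d → F)} (hSS : S ⊆ S') {k : ℕ} {v : Fin d → F}
    (h : IsCombOfAtMost S k v) : IsCombOfAtMost S' k v := by
  obtain ⟨t, c, hts, htc, hv⟩ := h
  exact ⟨t, c, fun x hx => hSS (hts hx), htc, hv⟩

lemma comb_cases {S : Set (Fin d → F)} {v : Fin d → F} (h : IsCombOfAtMost S 2 v) :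
    v = 0 ∨ (∃ s ∈ S, ∃ c : F, v = c • s) ∨
      ∃ s₁ ∈ S, ∃ s₂ ∈ S, ∃ c₁ c₂ : F, v = c₁ • s₁ + c₂ • s₂ := by
  classical
  obtain ⟨t, c, hts, htc, hv⟩ := h
  interval_cases h : t.card
  · left; rw [Finset.card_eq_zero.1 h] at hv; simpa using hv
  · obtain ⟨a, rfl⟩ := Finset.card_eq_one.1 h
    refine Or.inr (Or.inl ⟨a, hts (by simp), c a, by simpa using hv⟩)
  · obtain ⟨a, b, hab, rfl⟩ := Finset.card_eq_two.1 h
    refine Or.inr (Or.inr ⟨a, hts (by simp), b, hts (by simp), c a, c b, ?_⟩)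
    rw [hv, Finset.sum_pair hab]

lemma single_classify {y z w c : F} {s : Fin 4 → F} (hs : s ∈ setS1 F)
    (hv : ![1,y,z,w] = c • s) : z = 0 ∧ w = 0 := by
  rcases (mem_setS1_iff s).1 hs with ⟨a, rfl⟩ | ⟨b, hb, rfl⟩ | rfl | rfl <;>
    rw [smul_vec4, vec4_eq_iff] at hv <;> obtain ⟨e0, e1, e2, e3⟩ := hv
  · exact ⟨by linear_combination e2, by linear_combination e3⟩
  all_goals simp at e0

lemma key2 {y z w c₁ c₂ : F} {s₁ s₂ : Fin 4 → F}
    (h₁ : s₁ ∈ setS1 F) (h₂ : s₂ ∈ setS1 F)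
    (hv : ![1,y,z,w] = c₁ • s₁ + c₂ • s₂) :
    (z = 0 ∧ w = 0) ∨
    (∃ a b d : F, b ≠ 0 ∧ ((s₁ = ![1,a,0,0] ∧ s₂ = ![0,1,b,b^2]) ∨
        (s₂ = ![1,a,0,0] ∧ s₁ = ![0,1,b,b^2])) ∧ z = d*b ∧ w = d*b^2 ∧ y = a + d) ∨
    (∃ a : F, ((s₁ = ![1,a,0,0] ∧ s₂ = ![0,0,1,0]) ∨
        (s₂ = ![1,a,0,0] ∧ s₁ = ![0,0,1,0])) ∧ y = a ∧ w = 0) ∨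
    (∃ a : F, ((s₁ = ![1,a,0,0] ∧ s₂ = ![0,0,0,1]) ∨
        (s₂ = ![1,a,0,0] ∧ s₁ = ![0,0,0,1])) ∧ y = a ∧ z = 0) := by
  rcases (mem_setS1_iff s₁).1 h₁ with ⟨a₁, rfl⟩ | ⟨b₁, hb₁, rfl⟩ | rfl | rfl <;>
    rcases (mem_setS1_iff s₂).1 h₂ with ⟨a₂, rfl⟩ | ⟨b₂, hb₂, rfl⟩ | rfl | rfl <;>
      rw [smul_add_vec4, vec4_eq_iff] at hv <;> obtain ⟨e0, e1, e2, e3⟩ := hv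
  · exact Or.inl ⟨by linear_combination e2, by linear_combination e3⟩
  · exact Or.inr (Or.inl ⟨a₁, b₂, c₂, hb₂, Or.inl ⟨rfl, rfl⟩,
      by linear_combination e2, by linear_combination e3, by linear_combination e1 - a₁ * e0⟩)
  · exact Or.inr (Or.inr (Or.inl ⟨a₁, Or.inl ⟨rfl, rfl⟩,
      by linear_combination e1 - a₁ * e0, by linear_combination e3⟩))
  · exact Or.inr (Or.inr (Or.inr ⟨a₁, Or.inl ⟨rfl, rfl⟩,
      by linear_combination e1 - a₁ * e0, by linear_combination e2⟩))
  · exact Or.inr (Or.inl ⟨a₂, b₁, c₁, hb₁, Or.inr ⟨rfl, rfl⟩,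
      by linear_combination e2, by linear_combination e3, by linear_combination e1 - a₂ * e0⟩)
  · simp at e0
  · simp at e0
  · simp at e0
  · exact Or.inr (Or.inr (Or.inl ⟨a₂, Or.inr ⟨rfl, rfl⟩,
      by linear_combination e1 - a₂ * e0, by linear_combination e3⟩))
  · simp at e0
  · simp at e0
  · simp at e0
  · exact Or.inr (Or.inr (Or.inr ⟨a₂, Or.inr ⟨rfl, rfl⟩,
      by linear_combination e1 - a₂ * e0, by linear_combination e2⟩))
  · simp at e0
  · simp at e0
  · simp at e0

end Helpers
section Essential

variable {F : Type} [Field F]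

/-- Every point of `S₁` is essential. -/
lemma essential {P : Fin 4 → F} (hP : P ∈ setS1 F) :
    ∃ v : Fin 4 → F, v ≠ 0 ∧ ¬ IsCombOfAtMost (setS1 F \ {P}) 2 v := by
  have hdiff : setS1 F \ {P} ⊆ setS1 F := Set.diff_subset
  rcases (mem_setS1_iff P).1 hP with ⟨a₀, rfl⟩ | ⟨b₀, hb₀, rfl⟩ | rfl | rfl
  · -- P = (1,a₀,0,0); witness (1,a₀+1,1,1)
    refine ⟨![1, a₀+1, 1, 1], fun h => by simpa using congrFun h 0, fun h => ?_⟩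
    rcases comb_cases h with h0 | ⟨s, hs, c, hv⟩ | ⟨s₁, hs₁, s₂, hs₂, c₁, c₂, hv⟩
    · simpa using congrFun h0 0
    · simpa using (single_classify (hdiff hs) hv).1
    · rcases key2 (hdiff hs₁) (hdiff hs₂) hv with
        ⟨hz, _⟩ | ⟨a, b, dd, hb, hmem, hz, hw, hy⟩ | ⟨a, hmem, hy, hw⟩ | ⟨a, hmem, hz⟩
      · simpa using hz
      · have hb1 : b = 1 := by linear_combination b * hz - hw
        subst hb1
        have hd1 : dd = 1 := by linear_combination -hz
        subst hd1
        have ha : a = a₀ := by linear_combination -hy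
        subst ha
        rcases hmem with ⟨hA, _⟩ | ⟨hA, _⟩
        · exact hs₁.2 hA
        · exact hs₂.2 hA
      · simpa using hw
      · simpa using hz.2
  · -- P = (0,1,b₀,b₀²); witness (1,0,1,b₀)
    refine ⟨![1, 0, 1, b₀], fun h => by simpa using congrFun h 0, fun h => ?_⟩
    rcases comb_cases h with h0 | ⟨s, hs, c, hv⟩ | ⟨s₁, hs₁, s₂, hs₂, c₁, c₂, hv⟩
    · simpa using congrFun h0 0
    · simpa using (single_classify (hdiff hs) hv).1
    · rcases key2 (hdiff hs₁) (hdiff hs₂) hv with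
        ⟨hz, _⟩ | ⟨a, b, dd, hb, hmem, hz, hw, hy⟩ | ⟨a, hmem, hy, hw⟩ | ⟨a, hmem, hz⟩
      · simpa using hz
      · have hbb : b = b₀ := by linear_combination b * hz - hw
        subst hbb
        rcases hmem with ⟨_, hC⟩ | ⟨_, hC⟩
        · exact hs₂.2 hC
        · exact hs₁.2 hC
      · exact hb₀ hw
      · simpa using hz.2
  · -- P = E; witness (1,0,1,0)
    refine ⟨![1, 0, 1, 0], fun h => by simpa using congrFun h 0, fun h => ?_⟩
    rcases comb_cases h with h0 | ⟨s, hs, c, hv⟩ | ⟨s₁, hs₁, s₂, hs₂, c₁, c₂, hv⟩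
    · simpa using congrFun h0 0
    · simpa using (single_classify (hdiff hs) hv).1
    · rcases key2 (hdiff hs₁) (hdiff hs₂) hv with
        ⟨hz, _⟩ | ⟨a, b, dd, hb, hmem, hz, hw, hy⟩ | ⟨a, hmem, hy, hw⟩ | ⟨a, hmem, hz⟩
      · simpa using hz
      · exact hb (by linear_combination b * hz - hw)
      · rcases hmem with ⟨_, hC⟩ | ⟨_, hC⟩
        · exact hs₂.2 hC
        · exact hs₁.2 hC
      · simpa using hz.2
  · -- P = F; witness (1,0,0,1)
    refine ⟨![1, 0, 0, 1], fun h => by simpa using congrFun h 0, fun h => ?_⟩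
    rcases comb_cases h with h0 | ⟨s, hs, c, hv⟩ | ⟨s₁, hs₁, s₂, hs₂, c₁, c₂, hv⟩
    · simpa using congrFun h0 0
    · simpa using (single_classify (hdiff hs) hv).2
    · rcases key2 (hdiff hs₁) (hdiff hs₂) hv with
        ⟨_, hw⟩ | ⟨a, b, dd, hb, hmem, hz, hw, hy⟩ | ⟨a, hmem, hy, hw⟩ | ⟨a, hmem, hz⟩
      · simpa using hw
      · have : (1:F) = 0 := by linear_combination hw - b * hz
        simpa using this
      · simpa using hw
      · rcases hmem with ⟨_, hC⟩ | ⟨_, hC⟩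
        · exact hs₂.2 hC
        · exact hs₁.2 hC

end Essential
section Saturation

variable {F : Type} [Field F]

lemma exists_sq_ne [Fintype F] (h4 : 4 ≤ Fintype.card F) (s : F) :
    ∃ b : F, b ≠ 0 ∧ b^2 ≠ s := by
  classical
  by_contra h
  push_neg at h
  have hs : s = 1 := by have := h 1 one_ne_zero; linear_combination -this
  subst hs
  have h1 : ({1, -1} : Finset F).card ≤ 2 := (Finset.card_insert_le _ _).trans (by simp)
  have hT : ({0, 1, -1} : Finset F).card ≤ 3 := (Finset.card_insert_le _ _).trans (by omega)
  have : ∃ b : F, b ∉ ({0, 1, -1} : Finset F) := by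
    by_contra hb
    push_neg at hb
    have : (Finset.univ : Finset F) ⊆ {0, 1, -1} := fun x _ => hb x
    have := Finset.card_le_card this
    rw [Finset.card_univ] at this
    omega
  obtain ⟨b, hb⟩ := this
  simp only [Finset.mem_insert, Finset.mem_singleton, not_or] at hb
  obtain ⟨hb0, hb1, hbm⟩ := hb
  have hsq := h b hb0
  have : (b - 1) * (b + 1) = 0 := by linear_combination hsq
  rcases mul_eq_zero.1 this with h' | h'
  · exact hb1 (by linear_combination h')
  · exact hbm (by linear_combination h')

lemma sat2 [Fintype F] (h4 : 4 ≤ Fintype.card F) : SaturatesWithin (setS1 F) 2 := by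
  intro v hv
  have hv4 := vec4_ext v
  by_cases hx : v 0 = 0
  · by_cases hy : v 1 = 0
    · -- v = z•E + w•F
      refine comb_two (memE) (memF) (c₁ := v 2) (c₂ := v 3) (hv4.trans ?_)
      rw [hx, hy, smul_add_vec4, vec4_eq_iff]
      exact ⟨by ring, by ring, by ring, by ring⟩
    · by_cases hz : v 2 = 0
      · by_cases hw : v 3 = 0
        · -- v = y•(1,1,0,0) + (-y)•(1,0,0,0)
          refine comb_two (memA 1) (memA 0) (c₁ := v 1) (c₂ := -(v 1)) (hv4.trans ?_)
          rw [hx, hz, hw, smul_add_vec4, vec4_eq_iff]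
          exact ⟨by ring, by ring, by ring, by ring⟩
        · -- two conic points
          obtain ⟨b, hb0, hbs⟩ := exists_sq_ne h4 (-(v 3) / (v 1))
          obtain ⟨e, he0, hprod⟩ : ∃ e : F, e ≠ 0 ∧ v 1 * (b * e) = -(v 3) := by
            refine ⟨-(v 3) / (v 1 * b),
              div_ne_zero (neg_ne_zero.2 hw) (mul_ne_zero hy hb0), ?_⟩
            field_simp
          have hbe : b ≠ e := by
            rintro rfl
            apply hbs
            rw [eq_div_iff hy]
            linear_combination hprod
          have hsub : b - e ≠ 0 := sub_ne_zero.2 hbe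
          refine comb_two (memC hb0) (memC he0)
            (c₁ := -(v 1) * e / (b - e)) (c₂ := v 1 * b / (b - e)) (hv4.trans ?_)
          rw [hx, hz, smul_add_vec4, vec4_eq_iff]
          refine ⟨by field_simp; ring, ?_, ?_, ?_⟩
          · field_simp
            ring
          · field_simp
            ring
          · rw [div_mul_eq_mul_div, div_mul_eq_mul_div, ← add_div, eq_div_iff hsub]
            linear_combination (b - e) * hprod
      · -- z ≠ 0 : v = y•K_{z/y} + (w - z²/y)•F
        have hb0 : v 2 / v 1 ≠ 0 := div_ne_zero hz hy
        refine comb_two (memC hb0) (memF)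
          (c₁ := v 1) (c₂ := v 3 - (v 2)^2 / v 1) (hv4.trans ?_)
        rw [hx, smul_add_vec4, vec4_eq_iff]
        refine ⟨by ring, by field_simp; ring, by field_simp; ring, by field_simp; ring⟩
  · by_cases hz : v 2 = 0
    · by_cases hw : v 3 = 0
      · -- v = x • (1, y/x, 0, 0)
        refine comb_one (memA (v 1 / v 0)) (c := v 0) (hv4.trans ?_) 2 one_le_two
        rw [hz, hw, smul_vec4, vec4_eq_iff]
        refine ⟨by field_simp, by field_simp, by ring, by ring⟩
      · -- v = x•(1,y/x,0,0) + w•F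
        refine comb_two (memA (v 1 / v 0)) (memF) (c₁ := v 0) (c₂ := v 3) (hv4.trans ?_)
        rw [hz, smul_add_vec4, vec4_eq_iff]
        refine ⟨by field_simp; ring, by field_simp; ring, by ring, by ring⟩
    · by_cases hw : v 3 = 0
      · -- v = x•(1,y/x,0,0) + z•E
        refine comb_two (memA (v 1 / v 0)) (memE) (c₁ := v 0) (c₂ := v 2) (hv4.trans ?_)
        rw [hw, smul_add_vec4, vec4_eq_iff]
        refine ⟨by field_simp; ring, by field_simp; ring, by ring, by ring⟩
      · -- v = x•(1,a,0,0) + d•K_b with b = w/z, d = z²/w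
        have hb0 : v 3 / v 2 ≠ 0 := div_ne_zero hw hz
        refine comb_two (memA ((v 1 - (v 2)^2 / v 3) / v 0)) (memC hb0)
          (c₁ := v 0) (c₂ := (v 2)^2 / v 3) (hv4.trans ?_)
        rw [smul_add_vec4, vec4_eq_iff]
        refine ⟨by field_simp; ring, ?_, ?_, ?_⟩
        · field_simp
          ring
        · field_simp
          ring
        · field_simp
          ring

end Saturation
section Lower

variable {F : Type} [Field F]

lemma not_sat_small (k : ℕ) (hk : k < 2) : ¬ SaturatesWithin (setS1 F) k := by
  intro hsat
  obtain ⟨t, c, hts, htc, hv⟩ := hsat ![1,0,1,0] (fun h => by simpa using congrFun h 0)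
  have h01 : t.card = 0 ∨ t.card = 1 := by omega
  rcases h01 with h0 | h1
  · rw [Finset.card_eq_zero.1 h0] at hv
    simpa using congrFun hv 0
  · obtain ⟨a, rfl⟩ := Finset.card_eq_one.1 h1
    have ha : a ∈ setS1 F := hts (by simp)
    have := (single_classify ha (by simpa using hv)).1
    simpa using this

end Lower

section Card

variable {F : Type} [Field F] [Fintype F]

lemma ncard_setS1 : (setS1 F).ncard = 2 * Fintype.card F + 1 := by
  classical
  have hinjA : Function.Injective (fun a : F => ![1,a,0,0]) := by
    intro a b h
    simpa using congrFun h 1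
  have hinjC : Function.Injective (fun a : F => ![0,1,a,a^2]) := by
    intro a b h
    simpa using congrFun h 2
  have hA : {w : Fin 4 → F | ∃ a : F, a ≠ 0 ∧ w = ![1,a,0,0]}
      = (fun a : F => ![1,a,0,0]) '' {a : F | a ≠ 0} := by
    ext w
    simp only [Set.mem_setOf_eq, Set.mem_image]
    constructor
    · rintro ⟨a, ha, rfl⟩; exact ⟨a, ha, rfl⟩
    · rintro ⟨a, ha, rfl⟩; exact ⟨a, ha, rfl⟩
  have hC : {w : Fin 4 → F | ∃ a : F, a ≠ 0 ∧ w = ![0,1,a,a^2]}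
      = (fun a : F => ![0,1,a,a^2]) '' {a : F | a ≠ 0} := by
    ext w
    simp only [Set.mem_setOf_eq, Set.mem_image]
    constructor
    · rintro ⟨a, ha, rfl⟩; exact ⟨a, ha, rfl⟩
    · rintro ⟨a, ha, rfl⟩; exact ⟨a, ha, rfl⟩
  have hne : ({a : F | a ≠ 0}).ncard = Fintype.card F - 1 := by
    have : {a : F | a ≠ 0} = Set.univ \ {0} := by
      ext a; simp
    rw [this, Set.ncard_diff (by simp) (Set.toFinite _), Set.ncard_univ,
      Nat.card_eq_fintype_card, Set.ncard_singleton]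
  have hAcard : ({w : Fin 4 → F | ∃ a : F, a ≠ 0 ∧ w = ![1,a,0,0]}).ncard
      = Fintype.card F - 1 := by
    rw [hA, Set.ncard_image_of_injective _ hinjA, hne]
  have hCcard : ({w : Fin 4 → F | ∃ a : F, a ≠ 0 ∧ w = ![0,1,a,a^2]}).ncard
      = Fintype.card F - 1 := by
    rw [hC, Set.ncard_image_of_injective _ hinjC, hne]
  have hq1 : 1 ≤ Fintype.card F := Fintype.card_pos
  -- disjointness
  have d1 : Disjoint ({![1,0,0,0]} : Set (Fin 4 → F))
      {w | ∃ a : F, a ≠ 0 ∧ w = ![1,a,0,0]} := by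
    rw [Set.disjoint_left]
    rintro s rfl ⟨a, ha, h⟩
    exact ha (by simpa using (congrFun h 1).symm)
  have d2 : Disjoint (({![1,0,0,0]} : Set (Fin 4 → F))
      ∪ {w | ∃ a : F, a ≠ 0 ∧ w = ![1,a,0,0]})
      {w | ∃ a : F, a ≠ 0 ∧ w = ![0,1,a,a^2]} := by
    rw [Set.disjoint_left]
    rintro s (rfl | ⟨a, ha, rfl⟩) ⟨b, hb, h⟩ <;> simpa using congrFun h 0
  have d3 : Disjoint ((({![1,0,0,0]} : Set (Fin 4 → F))
      ∪ {w | ∃ a : F, a ≠ 0 ∧ w = ![1,a,0,0]})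
      ∪ {w | ∃ a : F, a ≠ 0 ∧ w = ![0,1,a,a^2]})
      ({![0,0,1,0], ![0,0,0,1]} : Set (Fin 4 → F)) := by
    rw [Set.disjoint_left]
    rintro s ((rfl | ⟨a, ha, rfl⟩) | ⟨b, hb, rfl⟩) (h | h) <;>
      first
        | simpa using congrFun h 0
        | simpa using congrFun h 1
  have hEF : (({![0,0,1,0], ![0,0,0,1]}) : Set (Fin 4 → F)).ncard = 2 := by
    apply Set.ncard_pair
    intro h
    simpa using congrFun h 2
  rw [setS1, Set.ncard_union_eq d3 (Set.toFinite _) (Set.toFinite _),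
    Set.ncard_union_eq d2 (Set.toFinite _) (Set.toFinite _),
    Set.ncard_union_eq d1 (Set.toFinite _) (Set.toFinite _),
    Set.ncard_singleton, hAcard, hCcard, hEF]
  omega

end Card

/-- for a prime power `q = 4` or `q ≥ 7`, the `(2q+1)`-set `S₁` is a
minimal `1`-saturating set in `PG(3,q)`. -/
theorem stmt8 (q : ℕ) (F : Type) [Field F] [Fintype F] (hF : Fintype.card F = q)
    (hq : q = 4 ∨ 7 ≤ q) :
    IsMinimalSaturatingSet (setS1 F) 1 ∧ (setS1 F).ncard = 2 * q + 1 := by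
  have hq4 : 4 ≤ Fintype.card F := by rw [hF]; rcases hq with rfl | h <;> omega
  constructor
  · constructor
    · exact ⟨sat2 hq4, fun k hk => not_sat_small k hk⟩
    · intro S' hS' hSsat
      obtain ⟨P, hPS, hPS'⟩ := Set.exists_of_ssubset hS'
      obtain ⟨v, hv0, hvn⟩ := essential hPS
      apply hvn
      apply comb_mono _ (hSsat.1 v hv0)
      intro x hx
      exact ⟨hS'.1 hx, fun hxP => hPS' (by rwa [Set.mem_singleton_iff.1 hxP] at hx)⟩
  · rw [ncard_setS1, hF]
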